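/- arXiv:2012.06495 — 10 statements merged into one kernel-verified Lean document; each statement's English description precedes it below -/
import Mathlib

section
/- Let I and n be positive integers with I dividing n, let l be a nonnegative integer, and let b be a real number such that both b and l/I lie in [0,1) and |b − l/I| < 1/(I·(n+1)). Then ⌊(n+1)·b⌋/n = ⌊(n+1)·(l/I)⌋/n = l/I. -/
theorem approximation_I (I n : ℕ) (hI : 0 < I) (hn : 0 < n) (hdvd : I ∣ n) (l : ℕ)
    (b : ℝ) (hb : b ∈ Set.Ico (0 : ℝ) 1) (hl : (l : ℝ) / I ∈ Set.Ico (0 : ℝ) 1)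
    (happ : |b - (l : ℝ) / I| < 1 / ((I : ℝ) * ((n : ℝ) + 1))) :
    (⌊((n : ℝ) + 1) * b⌋ : ℝ) / n = (⌊((n : ℝ) + 1) * ((l : ℝ) / I)⌋ : ℝ) / n ∧
      (⌊((n : ℝ) + 1) * ((l : ℝ) / I)⌋ : ℝ) / n = (l : ℝ) / I := by
  obtain ⟨m, hm⟩ := hdvd
  have hI' : (0:ℝ) < I := by exact_mod_cast hI
  have hn' : (0:ℝ) < n := by exact_mod_cast hn
  have hm0 : 0 < m := by
    rcases Nat.eq_zero_or_pos m with h | h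
    · subst h; simp at hm; omega
    · exact h
  have hm' : (0:ℝ) < m := by exact_mod_cast hm0
  have hnm : (n:ℝ) = I * m := by rw [hm]; push_cast; ring
  have hlI : l < I := by
    by_contra h
    push_neg at h
    have : (1:ℝ) ≤ (l:ℝ)/I := (one_le_div hI').mpr (by exact_mod_cast h)
    linarith [hl.2]
  have hpos : (0:ℝ) < (n:ℝ) + 1 := by linarith
  have hsplit : ((n : ℝ) + 1) * ((l : ℝ) / I) = (l:ℝ)*m + (l:ℝ)/I := by
    rw [hnm]
    field_simp
  have hcast : ((((l*m : ℕ)) : ℤ) : ℝ) = (l:ℝ)*m := by push_cast; ring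
  have hf2 : ⌊((n : ℝ) + 1) * ((l : ℝ) / I)⌋ = ((l*m : ℕ) : ℤ) := by
    rw [Int.floor_eq_iff, hsplit, hcast]
    constructor
    · linarith [hl.1]
    · linarith [hl.2]
  have hstep : ((n:ℝ)+1) * |b - (l:ℝ)/I| < 1/I := by
    calc ((n:ℝ)+1) * |b - (l:ℝ)/I| < ((n:ℝ)+1) * (1/((I:ℝ)*((n:ℝ)+1))) :=
          mul_lt_mul_of_pos_left happ hpos
    _ = 1/I := by field_simp
  have habs' : |((n:ℝ)+1)*b - ((n:ℝ)+1)*((l:ℝ)/I)| < 1/I := by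
    rw [show ((n:ℝ)+1)*b - ((n:ℝ)+1)*((l:ℝ)/I) = ((n:ℝ)+1)*(b - (l:ℝ)/I) by ring,
      abs_mul, abs_of_pos hpos]
    exact hstep
  obtain ⟨hlo, hhi⟩ := abs_lt.mp habs'
  have hup1 : ((l:ℝ)+1)/I ≤ 1 := by
    rw [div_le_one hI']
    exact_mod_cast hlI
  have hdivadd : (l:ℝ)/I + 1/I = ((l:ℝ)+1)/I := by ring
  have hf1 : ⌊((n : ℝ) + 1) * b⌋ = ((l*m : ℕ) : ℤ) := by
    have hb0 : (0:ℝ) ≤ ((n:ℝ)+1)*b := mul_nonneg (by linarith) hb.1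
    rw [Int.floor_eq_iff, hcast]
    constructor
    · rcases Nat.eq_zero_or_pos l with h | h
      · subst h
        simpa using hb0
      · have h1 : (1:ℝ) ≤ (l:ℝ) := by exact_mod_cast h
        have h2 : (1:ℝ)/I ≤ (l:ℝ)/I := by gcongr
        linarith [hlo, hsplit]
    · linarith [hhi, hsplit, hup1, hdivadd]
  rw [hf1, hf2]
  refine ⟨rfl, ?_⟩
  rw [hcast, hnm]
  field_simp
end

section
/- Let n be a positive integer, b a real number, and b_n = m/n with m an integer, such that |b − b_n| = ε/n. Then: (1) if ε < 1 − b then ⌊(n+1)b⌋/n ≤ b_n; (2) if ε ≤ b then ⌊(n+1)b⌋/n ≥ b_n; (3) if ε < min{b, 1−b} then ⌊(n+1)b⌋/n = b_n. -/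
theorem inequal (n : ℕ) (hn : 0 < n) (b : ℝ) (m : ℤ) (bn ε : ℝ)
    (hbn : bn = (m : ℝ) / n) (hε : |b - bn| = ε / n) :
    (ε < 1 - b → (⌊((n : ℝ) + 1) * b⌋ : ℝ) / n ≤ bn) ∧
    (ε ≤ b → (⌊((n : ℝ) + 1) * b⌋ : ℝ) / n ≥ bn) ∧
    (ε < min b (1 - b) → (⌊((n : ℝ) + 1) * b⌋ : ℝ) / n = bn) := by
  have hn' : (0:ℝ) < n := by exact_mod_cast hn
  have key : |(n:ℝ) * b - m| = ε := by
    have h1 : (n:ℝ) * b - m = n * (b - bn) := by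
      rw [hbn]; field_simp
    rw [h1, abs_mul, abs_of_pos hn', hε, mul_div_cancel₀ _ hn'.ne']
  have hub : (n:ℝ) * b - m ≤ ε := le_of_abs_le key.le
  have hlb : -ε ≤ (n:ℝ) * b - m := neg_le_of_abs_le key.le
  have h1 : ε < 1 - b → (⌊((n : ℝ) + 1) * b⌋ : ℝ) / n ≤ bn := by
    intro h
    have hfloor : ⌊((n : ℝ) + 1) * b⌋ ≤ m := by
      rw [Int.floor_le_iff]
      nlinarith
    rw [hbn]
    have : ((⌊((n : ℝ) + 1) * b⌋ : ℤ) : ℝ) ≤ (m : ℝ) := by exact_mod_cast hfloor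
    gcongr
  have h2 : ε ≤ b → (⌊((n : ℝ) + 1) * b⌋ : ℝ) / n ≥ bn := by
    intro h
    have hfloor : m ≤ ⌊((n : ℝ) + 1) * b⌋ := by
      rw [Int.le_floor]
      nlinarith
    rw [hbn]
    have : (m : ℝ) ≤ ((⌊((n : ℝ) + 1) * b⌋ : ℤ) : ℝ) := by exact_mod_cast hfloor
    gcongr
  refine ⟨h1, h2, fun h => le_antisymm (h1 (lt_min_iff.mp h).2) (h2 (lt_min_iff.mp h).1.le)⟩
end

section
/- For any positive integers n, l, any real number d, and any rational number r with n·r ∈ ℤ and r ≤ 1, the inequality r − l + l·⌊(n+1)d⌋/n ≥ ⌊(n+1)(r − l + l·d)⌋/n holds. -/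
theorem main_inequality (n l : ℕ) (hn : 0 < n) (hl : 0 < l) (d : ℝ) (r : ℚ)
    (hZ : ∃ m : ℤ, (n : ℚ) * r = m) (hr : r ≤ 1) :
    (r : ℝ) - l + l * (⌊((n : ℝ) + 1) * d⌋ : ℝ) / n ≥
      (⌊((n : ℝ) + 1) * ((r : ℝ) - l + l * d)⌋ : ℝ) / n := by
  obtain ⟨m, hm⟩ := hZ
  have hn' : (0:ℝ) < n := by positivity
  have hl' : (1:ℝ) ≤ l := by exact_mod_cast hl
  have hr' : (r:ℝ) ≤ 1 := by exact_mod_cast hr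
  have hm' : (n:ℝ) * r = m := by exact_mod_cast hm
  have h1 : ((n:ℝ)+1)*d < ⌊((n:ℝ)+1)*d⌋ + 1 := Int.lt_floor_add_one _
  have key : (⌊((n : ℝ) + 1) * ((r : ℝ) - l + l * d)⌋ : ℤ)
      ≤ m - n*l + l*⌊((n:ℝ)+1)*d⌋ := by
    rw [Int.floor_le_iff]
    push_cast
    nlinarith [h1, hr', hl']
  have key' : (⌊((n : ℝ) + 1) * ((r : ℝ) - l + l * d)⌋ : ℝ)
      ≤ (m:ℝ) - n*l + l*⌊((n:ℝ)+1)*d⌋ := by exact_mod_cast key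
  rw [ge_iff_le, div_le_iff₀ hn']
  rw [← hm'] at key'
  have hc : (l:ℝ)*(⌊((n:ℝ)+1)*d⌋:ℝ)/n*n = l*(⌊((n:ℝ)+1)*d⌋:ℝ) := by field_simp
  nlinarith [key', hc]
end

section
/- Let C be a finitely generated commutative monoid (with a finite set of generators C₁,…,C_r), let S be a set with a transitive action of C, and let T ⊆ S be a subset closed under the action of C. Then T can be covered by finitely many orbits of C, i.e., there exist t₁,…,t_k ∈ T with T = ⋃ᵢ (tᵢ + C). -/
/-- Finite basis consequence of PWO: every PWO set has a finite subset below everything. -/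
lemma pwo_finite_basis {α : Type*} [Preorder α] {s : Set α} (h : s.IsPWO) :
    ∃ t : Finset α, ↑t ⊆ s ∧ ∀ x ∈ s, ∃ y ∈ t, y ≤ x := by
  classical
  by_contra hc
  push_neg at hc
  choose x hxs hxnot using hc
  let F : ℕ → {t : Finset α // ↑t ⊆ s} := fun n =>
    Nat.rec ⟨∅, by simp⟩
      (fun _ p => ⟨insert (x p.1 p.2) p.1, by
        rw [Finset.coe_insert]
        exact Set.insert_subset (hxs p.1 p.2) p.2⟩) n
  let f : ℕ → α := fun n => x (F n).1 (F n).2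
  have hstep : ∀ n, (F (n + 1)).1 = insert (f n) (F n).1 := fun n => rfl
  have hmono : ∀ m n, m ≤ n → (F m).1 ⊆ (F n).1 := by
    intro m n hmn
    induction n with
    | zero => simp [Nat.le_zero.mp hmn]
    | succ k ih =>
      rcases Nat.lt_or_ge m (k + 1) with h1 | h1
      · refine (ih (Nat.lt_succ_iff.mp h1)).trans ?_
        rw [hstep]; exact Finset.subset_insert _ _
      · have : m = k + 1 := le_antisymm hmn h1
        subst this; rfl
  obtain ⟨m, n, hmn, hle⟩ := h.exists_lt (f := f) (fun n => hxs _ _)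
  exact hxnot (F n).1 (F n).2 (f m)
    (hmono (m + 1) n hmn (by rw [hstep]; exact Finset.mem_insert_self _ _)) hle

theorem fg_monoid_orbits (C S : Type*) [AddCommMonoid C] [AddMonoid.FG C] [AddAction C S]
    (htrans : ∃ x0 : S, ∀ s : S, ∃ c : C, c +ᵥ x0 = s)
    (T : Set S) (hT : ∀ t ∈ T, ∀ c : C, c +ᵥ t ∈ T) :
    ∃ F : Finset S, ↑F ⊆ T ∧ T = ⋃ t ∈ F, {s : S | ∃ c : C, c +ᵥ t = s} := by
  classical
  obtain ⟨x0, hx0⟩ := htrans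
  obtain ⟨G, hG⟩ := (AddMonoid.FG.fg_top : (⊤ : AddSubmonoid C).FG)
  -- the "evaluation" map from exponent vectors to C
  set f : (↥G → ℕ) → C := fun v => ∑ g : ↥G, v g • (g : C) with hf
  have hfadd : ∀ v w, f (v + w) = f v + f w := by
    intro v w
    simp [hf, add_smul, Finset.sum_add_distrib]
  have hfsurj : ∀ c : C, ∃ v, f v = c := by
    intro c
    have hc : c ∈ AddSubmonoid.closure (↑G : Set C) := by rw [hG]; trivial
    obtain ⟨l, hl, hsum⟩ := AddSubmonoid.exists_multiset_of_mem_closure hc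
    refine ⟨fun g => l.count (g : C), ?_⟩
    have h1 : ∑ g : ↥G, l.count (g : C) • (g : C) = ∑ c ∈ G, l.count c • c :=
      Finset.sum_coe_sort G (fun c => l.count c • c)
    have h2 : ∑ c ∈ l.toFinset, l.count c • c = ∑ c ∈ G, l.count c • c := by
      refine Finset.sum_subset ?_ ?_
      · intro c hc'
        exact hl c (Multiset.mem_toFinset.mp hc')
      · intro c _ hc'
        rw [Multiset.count_eq_zero_of_notMem (fun h => hc' (Multiset.mem_toFinset.mpr h))]
        simp
    have h3 : ∑ c ∈ l.toFinset, l.count c • c = l.sum := by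
      have := congrArg Multiset.sum (Multiset.toFinset_sum_count_nsmul_eq l)
      rw [← this, ← Multiset.coe_sumAddMonoidHom, map_sum]
      refine Finset.sum_congr rfl fun x _ => ?_
      rw [AddMonoidHom.map_nsmul]
      simp [Multiset.coe_sumAddMonoidHom]
    rw [hf]
    dsimp only
    rw [h1, ← h2, h3, hsum]
  set Φ : (↥G → ℕ) → S := fun v => f v +ᵥ x0 with hΦ
  have hΦsurj : ∀ s : S, ∃ v, Φ v = s := by
    intro s
    obtain ⟨c, hc⟩ := hx0 s
    obtain ⟨v, hv⟩ := hfsurj c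
    exact ⟨v, by rw [hΦ]; dsimp only; rw [hv, hc]⟩
  have hΦle : ∀ v w : ↥G → ℕ, v ≤ w → Φ w = f (w - v) +ᵥ Φ v := by
    intro v w hvw
    have hw : w - v + v = w := by
      funext g; exact Nat.sub_add_cancel (hvw g)
    rw [hΦ]; dsimp only
    rw [← hw, hfadd, add_vadd, hw]
  set I : Set (↥G → ℕ) := Φ ⁻¹' T with hI
  have hIpwo : I.IsPWO := by
    have h := Set.isPWO_of_wellQuasiOrderedLE (α := ↥G →₀ ℕ) (⇑Finsupp.equivFunOnFinite ⁻¹' I)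
    have himg : ⇑Finsupp.equivFunOnFinite '' (⇑Finsupp.equivFunOnFinite ⁻¹' I) = I :=
      Set.image_preimage_eq I Finsupp.equivFunOnFinite.surjective
    rw [← himg]
    exact Set.PartiallyWellOrderedOn.image_of_monotone_on h fun _a _b _ha _hb => id
  obtain ⟨t, hts, htcov⟩ := pwo_finite_basis hIpwo
  refine ⟨t.image Φ, ?_, ?_⟩
  · intro s hs
    rw [Finset.coe_image] at hs
    obtain ⟨v, hv, rfl⟩ := hs
    exact hts hv
  · ext s
    simp only [Set.mem_iUnion, Finset.mem_image, Set.mem_setOf_eq]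
    constructor
    · intro hs
      obtain ⟨v, hv⟩ := hΦsurj s
      have hvI : v ∈ I := by rw [hI, Set.mem_preimage, hv]; exact hs
      obtain ⟨m, hm, hmv⟩ := htcov v hvI
      exact ⟨Φ m, ⟨⟨m, hm, rfl⟩, f (v - m), by rw [← hΦle m v hmv, hv]⟩⟩
    · rintro ⟨_, ⟨⟨m, hm, rfl⟩, c, rfl⟩⟩
      exact hT (Φ m) (hts hm) c
end

section
/- Let 𝔑 be a finite set of positive integers and 𝔯 a finite set of rational numbers in [0,1] containing 1. Define Γ(𝔑,Φ) to be the set of rational numbers of the form b = 1 − r/l + (1/l)·∑_{n∈𝔑} m_n/(n+1) lying in [0,1], where r ∈ 𝔯, l is a positive integer, and the m_n are nonnegative integers. Then Γ(𝔑,Φ) = Φ(𝔯'), the hyperstandard set associated with 𝔯' = {r − ∑_{n∈𝔑} m_n/(n+1) : r ∈ 𝔯, m_n ∈ ℤ≥0} ∩ [0,+∞), and 𝔯' is a finite set of rational numbers in [0,1]. -/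
theorem every_sN_Phi_hyperstandard (N : Finset ℕ) (hN : ∀ n ∈ N, 0 < n)
    (R : Finset ℚ) (hR : ∀ r ∈ R, r ∈ Set.Icc (0 : ℚ) 1) (h1 : (1 : ℚ) ∈ R) :
    let R' : Set ℚ :=
      {r' | 0 ≤ r' ∧ ∃ r ∈ R, ∃ m : ℕ → ℕ, r' = r - ∑ n ∈ N, (m n : ℚ) / (n + 1)}
    R'.Finite ∧ R' ⊆ Set.Icc (0 : ℚ) 1 ∧
      {b : ℚ | b ∈ Set.Icc (0 : ℚ) 1 ∧ ∃ r ∈ R, ∃ l : ℕ, 0 < l ∧ ∃ m : ℕ → ℕ,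
          b = 1 - r / l + (1 / l) * ∑ n ∈ N, (m n : ℚ) / (n + 1)} =
        {b : ℚ | ∃ r' ∈ R', ∃ l : ℕ, 0 < l ∧ b = 1 - r' / l} := by
  intro R'
  have hsub : R' ⊆ Set.Icc (0 : ℚ) 1 := by
    rintro r' ⟨h0, r, hr, m, rfl⟩
    refine ⟨h0, ?_⟩
    have hs : (0:ℚ) ≤ ∑ n ∈ N, (m n : ℚ) / (n + 1) :=
      Finset.sum_nonneg fun n _ => by positivity
    have := (hR r hr).2
    linarith
  refine ⟨?_, hsub, ?_⟩
  · have hss : R' ⊆ (fun p : ℚ × (∀ n : {x // x ∈ N}, Fin (n.1 + 2)) =>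
        p.1 - ∑ n ∈ N.attach, ((p.2 n : ℕ) : ℚ) / (n.1 + 1)) ''
        ((R : Set ℚ) ×ˢ Set.univ) := by
      rintro r' ⟨h0, r, hr, m, rfl⟩
      have hs : ∀ n ∈ N, (0:ℚ) ≤ (m n : ℚ) / (n + 1) := fun n _ => by positivity
      have hsum1 : ∑ n ∈ N, (m n : ℚ) / (n + 1) ≤ 1 := by
        have := (hR r hr).2; linarith
      have hbound : ∀ n ∈ N, m n < n + 2 := by
        intro n hn
        have h1' : (m n : ℚ) / (n + 1) ≤ 1 :=
          le_trans (Finset.single_le_sum hs hn) hsum1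
        have hpos : (0:ℚ) < (n:ℚ) + 1 := by positivity
        have h2 : (m n : ℚ) ≤ (n:ℚ) + 1 := by
          rw [div_le_one hpos] at h1'; exact h1'
        have h3 : m n ≤ n + 1 := by exact_mod_cast h2
        omega
      refine ⟨(r, fun n => ⟨m n.1, hbound n.1 n.2⟩), ⟨hr, trivial⟩, ?_⟩
      simp only
      rw [← Finset.sum_attach N (fun n => (m n : ℚ) / (n + 1))]
    exact ((Set.Finite.prod R.finite_toSet Set.finite_univ).image _).subset hss
  · ext b
    simp only [Set.mem_setOf_eq]
    constructor
    · rintro ⟨⟨hb0, hb1⟩, r, hr, l, hl, m, rfl⟩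
      set s := ∑ n ∈ N, (m n : ℚ) / (n + 1) with hsdef
      have hl' : (0:ℚ) < l := by exact_mod_cast hl
      have key : 1 - r / l + (1 / l) * s = 1 - (r - s) / l := by
        field_simp; ring
      have h0 : 0 ≤ r - s := by
        rw [key] at hb1
        have hq : 0 ≤ (r - s) / l := by linarith
        have h2 : (r - s) / l * l = r - s := div_mul_cancel₀ _ hl'.ne'
        nlinarith
      exact ⟨r - s, ⟨h0, r, hr, m, rfl⟩, l, hl, key⟩
    · rintro ⟨r', hr', l, hl, rfl⟩
      obtain ⟨h0, r, hr, m, hm⟩ := hr'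
      have hr1 : r' ≤ 1 := (hsub ⟨h0, r, hr, m, hm⟩).2
      have hl' : (0:ℚ) < l := by exact_mod_cast hl
      have hl1 : (1:ℚ) ≤ l := by exact_mod_cast hl
      have hdiv : r' / l ≤ 1 := by
        rw [div_le_one hl']; linarith
      have hdiv0 : 0 ≤ r' / l := div_nonneg h0 (le_of_lt hl')
      refine ⟨⟨by linarith, by linarith⟩, r, hr, l, hl, m, ?_⟩
      rw [hm]
      field_simp
      ring
end

section
/- Let 𝔑 be a finite set of positive integers and 𝔯 a finite set of rational numbers in [0,1] with 1 ∈ 𝔯. Then the set Γ(𝔑,Φ) satisfies the descending chain condition with 1 as its only accumulation point; equivalently, for every ε > 0, the set Γ(𝔑,Φ) ∩ [0, 1−ε] is finite. Moreover if 𝔑 ≠ ∅ then 1 ∈ Γ(𝔑,Φ). -/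
theorem accumulation_one (N : Finset ℕ) (hN : ∀ n ∈ N, 0 < n)
    (R : Finset ℚ) (hR : ∀ r ∈ R, r ∈ Set.Icc (0 : ℚ) 1) (h1 : (1 : ℚ) ∈ R) :
    let Γ : Set ℚ :=
      {b | b ∈ Set.Icc (0 : ℚ) 1 ∧ ∃ r ∈ R, ∃ l : ℕ, 0 < l ∧ ∃ m : ℕ → ℕ,
          b = 1 - r / l + (1 / l) * ∑ n ∈ N, (m n : ℚ) / (n + 1)}
    (¬ ∃ f : ℕ → ℚ, StrictAnti f ∧ ∀ i, f i ∈ Γ) ∧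
      (∀ ε : ℚ, 0 < ε → (Γ ∩ Set.Icc 0 (1 - ε)).Finite) ∧
      (N.Nonempty → (1 : ℚ) ∈ Γ) := by
  intro Γ
  have key : ∀ ε : ℚ, 0 < ε → (Γ ∩ Set.Icc 0 (1 - ε)).Finite := by
    intro ε hε
    set K : ℕ := ⌈(ε⁻¹ : ℚ)⌉₊ with hK
    set P : ℕ := ∏ n ∈ N, (n + 1) with hP
    set Q : ℕ := ∏ s ∈ R, s.den with hQ
    set D : ℕ := K.factorial * P * Q with hD
    have hPpos : 0 < P := Finset.prod_pos (fun n _ => Nat.succ_pos n)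
    have hQpos : 0 < Q := Finset.prod_pos (fun s _ => s.pos)
    have hDpos : 0 < D := by
      have := Nat.factorial_pos K
      positivity
    have hDq : (0 : ℚ) < D := by exact_mod_cast hDpos
    have hsub : Γ ∩ Set.Icc 0 (1 - ε) ⊆
        (fun z : ℤ => (z : ℚ) / D) '' (Set.Icc (0 : ℤ) D) := by
      rintro b ⟨⟨⟨hb0, hb1⟩, r, hrR, l, hl, m, hbeq⟩, _, hble⟩
      obtain ⟨hr0, hr1⟩ := hR r hrR
      have hl0q : (0 : ℚ) < l := by exact_mod_cast hl
      have hl0 : ((l : ℚ)) ≠ 0 := ne_of_gt hl0q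
      have hSnn : (0 : ℚ) ≤ ∑ n ∈ N, (m n : ℚ) / (n + 1) :=
        Finset.sum_nonneg fun n _ => by positivity
      -- bound l ≤ K
      have hεl : ε ≤ 1 / l := by
        have h2 : ε ≤ r / l - (1 / l) * ∑ n ∈ N, (m n : ℚ) / (n + 1) := by
          rw [hbeq] at hble; linarith
        have h3 : (0 : ℚ) ≤ (1 / l) * ∑ n ∈ N, (m n : ℚ) / (n + 1) := by positivity
        have h4 : r / l ≤ 1 / l := by gcongr
        linarith
      have hlK : l ≤ K := by
        have h5 : (l : ℚ) ≤ ε⁻¹ := by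
          rw [le_inv_comm₀ hl0q hε, ← one_div]; exact hεl
        have h6 : (ε⁻¹ : ℚ) ≤ (K : ℚ) := Nat.le_ceil _
        exact_mod_cast h5.trans h6
      -- integrality of b * D
      have hldvd : l ∣ K.factorial := Nat.dvd_factorial hl hlK
      set F := K.factorial / l with hF
      have hlFq : (l : ℚ) * F = (K.factorial : ℚ) := by
        exact_mod_cast congrArg (Nat.cast (R := ℚ)) (Nat.mul_div_cancel' hldvd)
      have hdenQ : r.den ∣ Q := Finset.dvd_prod_of_mem _ hrR
      set G := Q / r.den with hG
      have hdGq : (r.den : ℚ) * G = (Q : ℚ) := by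
        exact_mod_cast congrArg (Nat.cast (R := ℚ)) (Nat.mul_div_cancel' hdenQ)
      have hnum : r * r.den = (r.num : ℚ) := by exact_mod_cast Rat.mul_den_eq_num r
      have hsum : (∑ n ∈ N, (m n : ℚ) / (n + 1)) * P
          = ∑ n ∈ N, (m n : ℚ) * ((P / (n + 1) : ℕ) : ℚ) := by
        rw [Finset.sum_mul]
        refine Finset.sum_congr rfl fun n hn => ?_
        have hdvd : (n + 1) ∣ P := Finset.dvd_prod_of_mem _ hn
        have hc : ((n : ℚ) + 1) * ((P / (n + 1) : ℕ) : ℚ) = (P : ℚ) := by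
          exact_mod_cast congrArg (Nat.cast (R := ℚ)) (Nat.mul_div_cancel' hdvd)
        have hn0 : ((n : ℚ) + 1) ≠ 0 := by positivity
        field_simp
        rw [← hc]; ring
      set TS : ℕ := ∑ n ∈ N, m n * (P / (n + 1)) with hTS
      have hTSq : (TS : ℚ) = ∑ n ∈ N, (m n : ℚ) * ((P / (n + 1) : ℕ) : ℚ) := by
        rw [hTS]; push_cast; rfl
      have hz : b * D =
          (((K.factorial * P * Q : ℕ) - r.num * (G * (F * P))
            + (TS : ℤ) * (F * Q) : ℤ) : ℚ) := by
        rw [hbeq, hD]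
        push_cast
        rw [hTSq]
        have hli : (l : ℚ) * (l : ℚ)⁻¹ = 1 := mul_inv_cancel₀ hl0
        linear_combination (((∑ n ∈ N, (m n : ℚ) / (n + 1)) - r) * ((P:ℚ) * Q * F)) * hli
          + (-((∑ n ∈ N, (m n : ℚ) / (n + 1)) - r) / l * ((P:ℚ) * Q)) * hlFq
          + (r * (F:ℚ) * P) * hdGq + (-((G:ℚ) * F * P)) * hnum + ((F:ℚ) * Q) * hsum
      set z : ℤ := (K.factorial * P * Q : ℕ) - r.num * (G * (F * P)) + (TS : ℤ) * (F * Q)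
        with hzdef
      refine ⟨z, ⟨?_, ?_⟩, ?_⟩
      · have : (0 : ℚ) ≤ (z : ℚ) := by rw [← hz]; positivity
        exact_mod_cast this
      · have : (z : ℚ) ≤ ((D : ℤ) : ℚ) := by
          rw [← hz]; push_cast
          nlinarith [hb1, hDq]
        exact_mod_cast this
      · field_simp
        linarith [hz]
    exact Set.Finite.subset ((Set.finite_Icc (0 : ℤ) D).image _) hsub
  refine ⟨?_, key, ?_⟩
  · rintro ⟨f, hanti, hmem⟩
    have hf1lt : f 1 < f 0 := hanti (by norm_num)
    have hf01 : f 0 ≤ 1 := (hmem 0).1.2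
    have hε : 0 < 1 - f 1 := by linarith
    have hinf : (Γ ∩ Set.Icc 0 (1 - (1 - f 1))).Infinite := by
      refine Set.infinite_of_injective_forall_mem
        (f := fun i : ℕ => f (i + 1)) ?_ ?_
      · intro a b hab
        have := hanti.injective hab
        omega
      · intro i
        refine ⟨(hmem (i + 1)), (hmem (i + 1)).1.1, ?_⟩
        have : f (i + 1) ≤ f 1 := hanti.antitone (by omega)
        linarith
    exact hinf (key _ hε)
  · rintro ⟨n₀, hn₀⟩
    refine ⟨⟨by norm_num, le_refl _⟩, 1, h1, 1, one_pos,
      (fun n => if n = n₀ then n + 1 else 0), ?_⟩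
    have hsum : ∑ n ∈ N, ((if n = n₀ then (n : ℕ) + 1 else 0 : ℕ) : ℚ) / (n + 1) = 1 := by
      rw [Finset.sum_eq_single n₀]
      · simp
        have : ((n₀ : ℚ) + 1) ≠ 0 := by positivity
        field_simp
        exact this
      · intro n _ hne
        simp [hne]
      · intro h; exact absurd hn₀ h
    rw [hsum]
    norm_num
end

section
/- Let n be a positive integer and let b, b⁺ ∈ [0,1] with b⁺ ∈ ℤ/n (i.e., n·b⁺ is an integer). Let b' be the largest element of Γ({n},Φ) that is ≤ b (a best lower approximation). If b⁺ ≥ b', then b⁺ satisfies the complement inequality with respect to b: b⁺ ≥ 1 when b = 1, and b⁺ ≥ ⌊(n+1)b⌋/n when b < 1. -/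
theorem one_of_def_two_for_B (n : ℕ) (hn : 0 < n)
    (R : Finset ℚ) (hR : ∀ r ∈ R, r ∈ Set.Icc (0 : ℚ) 1) (h1 : (1 : ℚ) ∈ R)
    (b bp : ℝ) (hb : b ∈ Set.Icc (0 : ℝ) 1) (hbp : bp ∈ Set.Icc (0 : ℝ) 1)
    (hZ : ∃ m : ℤ, (n : ℝ) * bp = m)
    (b' : ℚ)
    (hb'mem : b' ∈ Set.Icc (0 : ℚ) 1 ∧ ∃ r ∈ R, ∃ l : ℕ, 0 < l ∧ ∃ m : ℕ,
        (b' : ℚ) = 1 - r / l + (1 / l) * ((m : ℚ) / (n + 1)))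
    (hb'le : (b' : ℝ) ≤ b)
    (hmax : ∀ x : ℚ,
        (x ∈ Set.Icc (0 : ℚ) 1 ∧ ∃ r ∈ R, ∃ l : ℕ, 0 < l ∧ ∃ m : ℕ,
          x = 1 - r / l + (1 / l) * ((m : ℚ) / (n + 1))) → (x : ℝ) ≤ b → x ≤ b')
    (hge : (b' : ℝ) ≤ bp) :
    (b = 1 → 1 ≤ bp) ∧ (b < 1 → (⌊((n : ℝ) + 1) * b⌋ : ℝ) / n ≤ bp) := by
  obtain ⟨k, hk⟩ := hZ
  have hn1 : (0:ℚ) < (n:ℚ) + 1 := by positivity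
  have hnR : (0:ℝ) < (n:ℝ) := by exact_mod_cast hn
  constructor
  · intro hb1
    have hx : (1:ℚ) ≤ b' := by
      refine hmax 1 ⟨⟨zero_le_one, le_refl 1⟩, 1, h1, 1, one_pos, n + 1, ?_⟩ ?_
      · push_cast; field_simp; ring
      · rw [hb1]; norm_num
    have : (1:ℝ) ≤ (b' : ℝ) := by exact_mod_cast hx
    linarith
  · intro hblt
    set m : ℤ := ⌊((n : ℝ) + 1) * b⌋ with hm
    have hm0 : 0 ≤ m := by
      apply Int.le_floor.2; simp; nlinarith [hb.1]
    have hmn : m ≤ n := by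
      have : ((n : ℝ) + 1) * b < (n : ℝ) + 1 := by nlinarith [hb.1]
      have h2 : (m:ℝ) < (n:ℝ) + 1 := lt_of_le_of_lt (Int.floor_le _) this
      have h3 : m < (n:ℤ) + 1 := by exact_mod_cast h2
      omega
    have hcast : ((m.toNat : ℝ)) = (m : ℝ) := by exact_mod_cast Int.toNat_of_nonneg hm0
    have hxmem : ((m.toNat : ℚ) / (n + 1) : ℚ) ≤ b' := by
      refine hmax _ ⟨⟨by positivity, ?_⟩, 1, h1, 1, one_pos, m.toNat, by field_simp; simp⟩ ?_
      · rw [div_le_one hn1]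
        have : (m.toNat : ℚ) ≤ (n : ℚ) := by
          exact_mod_cast (Int.toNat_le.2 hmn)
        linarith
      · push_cast
        rw [hcast, div_le_iff₀ (by positivity)]
        calc ((m:ℝ)) ≤ ((n:ℝ)+1) * b := Int.floor_le _
          _ = b * ((n:ℝ)+1) := by ring
    have hxbp : (m : ℝ) / ((n:ℝ) + 1) ≤ bp := by
      have : (((m.toNat : ℚ) / (n + 1) : ℚ) : ℝ) ≤ bp := le_trans (by exact_mod_cast hxmem) hge
      push_cast at this
      rwa [hcast] at this
    -- bp = k/n, show m ≤ k
    have hk0 : 0 ≤ k := by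
      have : (0:ℝ) ≤ (k:ℝ) := by rw [← hk]; exact mul_nonneg hnR.le hbp.1
      exact_mod_cast this
    have hcross : (m:ℝ) * (n:ℝ) ≤ (k:ℝ) * ((n:ℝ)+1) := by
      rw [div_le_iff₀ (by positivity)] at hxbp
      nlinarith [hk]
    have hcrossZ : m * n ≤ k * (n + 1) := by exact_mod_cast hcross
    have hmk : m ≤ k := by
      by_contra h
      push_neg at h
      have hnZ : (1:ℤ) ≤ (n:ℤ) := by exact_mod_cast hn
      nlinarith
    rw [div_le_iff₀ hnR]
    calc (m:ℝ) ≤ (k:ℝ) := by exact_mod_cast hmk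
      _ = (n:ℝ) * bp := hk.symm
      _ = bp * n := by ring
end

section
/- Let n, l be positive integers, d ≤ 1 a real number, and r ≤ 1 a rational number with n·r ∈ ℤ. Define the rounding ⟨x⟩_n = 1 if x = 1 and ⟨x⟩_n = ⌊(n+1)x⌋/n otherwise. Let b = r − l + l·d correspond to d under the inverse adjunction b ↦ r − l + l·b, and let b^{[n]} = r − l + l·⟨d⟩_n. Then ⟨b⟩_n ≤ b^{[n]}. -/
theorem inverse_n_monotonicity (n l : ℕ) (hn : 0 < n) (hl : 0 < l)
    (d : ℝ) (hd : d ≤ 1) (r : ℚ) (hr : r ≤ 1) (hZ : ∃ m : ℤ, (n : ℚ) * r = m)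
    (b bn : ℝ) (hb : b = (r : ℝ) - l + l * d)
    (hbn : bn = (r : ℝ) - l + l * (if d = 1 then (1 : ℝ) else (⌊((n : ℝ) + 1) * d⌋ : ℝ) / n)) :
    (if b = 1 then (1 : ℝ) else (⌊((n : ℝ) + 1) * b⌋ : ℝ) / n) ≤ bn := by
  obtain ⟨m, hm⟩ := hZ
  have hmr : (n : ℝ) * (r : ℝ) = (m : ℝ) := by exact_mod_cast congrArg (Rat.cast (K := ℝ)) hm
  have hn' : (0:ℝ) < n := by exact_mod_cast hn
  have hl' : (1:ℝ) ≤ l := by exact_mod_cast hl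
  have hr' : (r:ℝ) ≤ 1 := by exact_mod_cast hr
  by_cases hd1 : d = 1
  · subst hd1
    have hb' : b = (r:ℝ) := by rw [hb]; ring
    have hbn' : bn = (r:ℝ) := by rw [hbn]; norm_num
    by_cases hb1 : b = 1
    · rw [if_pos hb1, hbn']; linarith [hb' ▸ hb1]
    · rw [if_neg hb1, hbn', hb']
      have hrlt : (r:ℝ) < 1 := lt_of_le_of_ne hr' (by rw [hb'] at hb1; exact hb1)
      have h2 : ((n:ℝ)+1) * r = (m:ℝ) + r := by linarith [hmr]
      rw [h2]
      have h3 : ⌊(m:ℝ) + (r:ℝ)⌋ = m + ⌊(r:ℝ)⌋ := Int.floor_intCast_add m _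
      have h4 : ⌊(r:ℝ)⌋ ≤ 0 := by
        have := Int.floor_lt.mpr (by exact_mod_cast hrlt : (r:ℝ) < ((1:ℤ):ℝ))
        omega
      rw [h3]
      rw [div_le_iff₀ hn']
      have : ((m + ⌊(r:ℝ)⌋ : ℤ) : ℝ) ≤ (m:ℝ) := by
        push_cast
        have : ((⌊(r:ℝ)⌋ : ℝ)) ≤ 0 := by exact_mod_cast h4
        linarith
      nlinarith [hmr]
  · have hdlt : d < 1 := lt_of_le_of_ne hd hd1
    rw [if_neg hd1] at hbn
    have hblt : b < 1 := by rw [hb]; nlinarith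
    rw [if_neg (ne_of_lt hblt)]
    set t := ((n:ℝ)+1) * d with ht
    have hf : t - ⌊t⌋ < 1 := by linarith [Int.lt_floor_add_one t]
    have key : ⌊((n:ℝ)+1) * b⌋ ≤ m - (n:ℤ)*l + l*⌊t⌋ := by
      have h1 : ((n:ℝ)+1)*b < ((m - (n:ℤ)*l + l*⌊t⌋ : ℤ) : ℝ) + 1 := by
        push_cast
        rw [hb]
        nlinarith [hmr, hf, Int.floor_le t]
      have := Int.floor_lt.mpr (by push_cast; push_cast at h1; linarith : ((n:ℝ)+1)*b < (((m - (n:ℤ)*l + l*⌊t⌋ + 1) : ℤ) : ℝ))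
      omega
    have keyR : ((⌊((n:ℝ)+1)*b⌋ : ℤ) : ℝ) ≤ (m:ℝ) - (n:ℝ)*l + (l:ℝ)*(⌊t⌋:ℝ) := by
      exact_mod_cast key
    rw [hbn, div_le_iff₀ hn']
    have expand : ((r:ℝ) - l + l*((⌊t⌋:ℝ)/n)) * n = (n:ℝ)*r - n*l + l*⌊t⌋ := by
      field_simp
    rw [expand]
    linarith [hmr]
end

section
/- Let 𝔯 and 𝔯'' be finite sets of rational numbers in [0,1] with 1 ∈ 𝔯 ∩ 𝔯'', and define 𝔯' = {r' − l(1−r) : r ∈ 𝔯'', r' ∈ 𝔯, l a positive integer, r' − l(1−r) ≥ 0}. Then 𝔯' is a finite set of rational numbers in [0,1] containing 1, and for any parameters r ∈ 𝔯'' and positive integer l, if b ∈ Φ(𝔯) with b ≤ r, then d = 1 − r/l + b/l belongs to Φ(𝔯'). -/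
theorem direct_hyperstandard (R R'' : Finset ℚ)
    (hR : ∀ r ∈ R, r ∈ Set.Icc (0 : ℚ) 1) (hR'' : ∀ r ∈ R'', r ∈ Set.Icc (0 : ℚ) 1)
    (h1R : (1 : ℚ) ∈ R) (h1R'' : (1 : ℚ) ∈ R'') :
    let R' : Set ℚ :=
      {x | ∃ r ∈ R'', ∃ r' ∈ R, ∃ l : ℕ, 0 < l ∧ x = r' - l * (1 - r) ∧ 0 ≤ x}
    R'.Finite ∧ R' ⊆ Set.Icc (0 : ℚ) 1 ∧ (1 : ℚ) ∈ R' ∧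
      ∀ r ∈ R'', ∀ l : ℕ, 0 < l →
        ∀ b : ℚ, (∃ r' ∈ R, ∃ m : ℕ, 0 < m ∧ b = 1 - r' / m) → b ≤ r →
          ∃ r' ∈ R', ∃ m : ℕ, 0 < m ∧ 1 - r / l + b / l = 1 - r' / m := by
  intro R'
  refine ⟨?_, ?_, ?_, ?_⟩
  · -- finiteness
    have hsub : R' ⊆ ⋃ r ∈ (R'' : Set ℚ), ⋃ r' ∈ (R : Set ℚ),
        {x | ∃ l : ℕ, 0 < l ∧ x = r' - l * (1 - r) ∧ 0 ≤ x} := by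
      rintro x ⟨r, hr, r', hr', l, hl, hx, hx0⟩
      simp only [Set.mem_iUnion]
      exact ⟨r, hr, r', hr', l, hl, hx, hx0⟩
    refine Set.Finite.subset ?_ hsub
    refine Set.Finite.biUnion R''.finite_toSet fun r hr =>
      Set.Finite.biUnion R.finite_toSet fun r' hr' => ?_
    by_cases h : r = 1
    · refine Set.Finite.subset (Set.finite_singleton r') ?_
      rintro x ⟨l, hl, hx, hx0⟩
      simp [h] at hx
      simp [hx]
    · have hr1 : 0 < 1 - r := by
        have h2 := (hR'' r hr).2
        rcases lt_or_eq_of_le h2 with h' | h'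
        · linarith
        · exact absurd h' h
      refine Set.Finite.subset
        ((Set.finite_Iic (⌈r' / (1 - r)⌉₊)).image (fun l : ℕ => r' - l * (1 - r))) ?_
      rintro x ⟨l, hl, hx, hx0⟩
      refine ⟨l, ?_, hx.symm⟩
      have h1 : (l : ℚ) * (1 - r) ≤ r' := by linarith
      have h2 : (l : ℚ) ≤ r' / (1 - r) := (le_div_iff₀ hr1).2 h1
      have h3 : (l : ℚ) ≤ (⌈r' / (1 - r)⌉₊ : ℚ) := h2.trans (Nat.le_ceil _)
      exact Set.mem_Iic.2 (by exact_mod_cast h3)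
  · rintro x ⟨r, hr, r', hr', l, hl, hx, hx0⟩
    have h1 := (hR r' hr').2
    have h2 := (hR'' r hr).2
    have hl1 : (1 : ℚ) ≤ (l : ℚ) := by exact_mod_cast hl
    refine ⟨hx0, ?_⟩
    nlinarith
  · exact ⟨1, h1R'', 1, h1R, 1, one_pos, by norm_num, by norm_num⟩
  · rintro r hr l hl b ⟨r', hr', m, hm, hb⟩ hbr
    have hm0 : ((m : ℚ)) ≠ 0 := by positivity
    have hl0 : ((l : ℚ)) ≠ 0 := by positivity
    have hr'eq : r' = m * (1 - b) := by
      field_simp at hb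
      linarith
    have hρ : (0 : ℚ) ≤ r' - m * (1 - r) := by
      have : r' - m * (1 - r) = m * (r - b) := by rw [hr'eq]; ring
      rw [this]
      have : (0:ℚ) ≤ (m:ℚ) := by positivity
      nlinarith
    refine ⟨r' - m * (1 - r), ⟨r, hr, r', hr', m, hm, rfl, hρ⟩, m * l,
      Nat.mul_pos hm hl, ?_⟩
    push_cast
    rw [hr'eq]
    field_simp
    ring
end

section
/- Let Γ ⊆ [0,1] be a set satisfying the descending chain condition and 𝔯'' a finite subset of [0,1]. Then the set Γ' = {1 − r/l + b/l : r ∈ 𝔯'', l a positive integer, b ∈ Γ, r ≥ b} also satisfies the descending chain condition. -/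
theorem direct_dcc (Γ : Set ℝ) (hΓ : Γ ⊆ Set.Icc 0 1)
    (hdcc : ¬ ∃ f : ℕ → ℝ, StrictAnti f ∧ ∀ i, f i ∈ Γ)
    (R'' : Set ℝ) (hfin : R''.Finite) (hR'' : R'' ⊆ Set.Icc 0 1) :
    ¬ ∃ f : ℕ → ℝ, StrictAnti f ∧ ∀ i,
      f i ∈ {x : ℝ | ∃ r ∈ R'', ∃ l : ℕ, 0 < l ∧ ∃ b ∈ Γ, b ≤ r ∧ x = 1 - r / l + b / l} := by
  rintro ⟨f, hf, hmem⟩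
  apply hdcc
  choose r hr l hl b hb hbr hfeq using hmem
  have hlpos : ∀ i, (0:ℝ) < l i := fun i => by exact_mod_cast hl i
  have hform : ∀ i, f i = 1 - (r i - b i) / l i := by
    intro i; rw [hfeq i, sub_div]; ring
  have hf0 : f 0 ≤ 1 := by
    have h1 : (0:ℝ) ≤ (r 0 - b 0) / l 0 :=
      div_nonneg (by linarith [hbr 0]) (hlpos 0).le
    rw [hform 0]; linarith
  have hf1 : f 1 < 1 := lt_of_lt_of_le (hf (show (0:ℕ) < 1 by norm_num)) hf0
  set ε : ℝ := 1 - f 1 with hε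
  have hεpos : 0 < ε := by simp [hε]; linarith
  have hlb : ∀ i, (l (i+1) : ℝ) ≤ 1 / ε := by
    intro i
    have hle : f (i+1) ≤ f 1 := hf.antitone (by omega)
    have hrb : r (i+1) - b (i+1) ≤ 1 := by
      have h1 := (hR'' (hr (i+1))).2
      have h2 := (hΓ (hb (i+1))).1
      linarith
    have h3 : (r (i+1) - b (i+1)) / l (i+1) ≤ 1 / l (i+1) := by
      gcongr
    have h4 : 1 - 1 / (l (i+1) : ℝ) ≤ f 1 := by
      rw [hform (i+1)] at hle; linarith
    have h5 : ε ≤ 1 / (l (i+1) : ℝ) := by linarith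
    rw [le_div_iff₀ hεpos]
    calc (l (i+1) : ℝ) * ε ≤ (l (i+1) : ℝ) * (1 / (l (i+1) : ℝ)) := by
          gcongr
      _ = 1 := mul_one_div_cancel (hlpos (i+1)).ne'
  set N : ℕ := ⌈1 / ε⌉₊ with hN
  have hlN : ∀ i, l (i+1) < N + 1 := by
    intro i
    have : (l (i+1) : ℝ) ≤ (N : ℝ) := le_trans (hlb i) (Nat.le_ceil _)
    exact_mod_cast lt_of_le_of_lt (by exact_mod_cast this) (Nat.lt_succ_self N)
  haveI := hfin.to_subtype
  set φ : ℕ → ↥R'' × Fin (N+1) :=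
    fun i => (⟨r (i+1), hr (i+1)⟩, ⟨l (i+1), hlN i⟩) with hφ
  obtain ⟨y, hy⟩ := Finite.exists_infinite_fiber φ
  have hyS : {i | φ i = y}.Infinite := by
    rw [← Set.infinite_coe_iff]; exact hy
  set p : ℕ → Prop := fun i => φ i = y with hp
  have hmono : StrictMono (Nat.nth p) := Nat.nth_strictMono hyS
  have hpg : ∀ n, φ (Nat.nth p n) = y := fun n => Nat.nth_mem_of_infinite hyS n
  refine ⟨fun n => b (Nat.nth p n + 1), ?_, fun n => hb _⟩
  intro m n hmn
  have h1 : f (Nat.nth p n + 1) < f (Nat.nth p m + 1) := hf (by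
    have := hmono hmn; omega)
  have hreq : r (Nat.nth p n + 1) = r (Nat.nth p m + 1) := by
    have h := (hpg n).trans (hpg m).symm
    exact congrArg (fun t => (t.1 : ℝ)) h
  have hleq : l (Nat.nth p n + 1) = l (Nat.nth p m + 1) := by
    have h := (hpg n).trans (hpg m).symm
    exact congrArg (fun t => (t.2 : ℕ)) h
  rw [hfeq (Nat.nth p n + 1), hfeq (Nat.nth p m + 1), hreq, hleq] at h1
  have hL := hlpos (Nat.nth p m + 1)
  have h2 : b (Nat.nth p n + 1) / (l (Nat.nth p m + 1) : ℝ)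
      < b (Nat.nth p m + 1) / (l (Nat.nth p m + 1) : ℝ) := by linarith
  exact (div_lt_div_iff_of_pos_right hL).mp h2
end
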